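/- arXiv:1606.03814 — 4 statements merged into one kernel-verified Lean document; each statement's English description precedes it below -/
import Mathlib

section
/- Let Σ̂ be a p×p real symmetric matrix with eigenvalues ŷ₁ ≤ ⋯ ≤ ŷ_p, let ε > ŷ₁, and for μ ≥ ε set α* = (μ-ε)/(μ-ŷ₁) and Φ(Σ̂) = α*Σ̂ + (1-α*)μI. Then ‖Φ(Σ̂) - Σ̂‖₂ ≥ ε - ŷ₁ for all μ ≥ ε, where ‖·‖₂ is the spectral norm, and equality holds whenever μ ≥ max(ε, (ŷ_p + ŷ₁)/2). -/
open Matrix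
open scoped Matrix.Norms.L2Operator

lemma diag_l2_norm_le {m : Type*} [Fintype m] [DecidableEq m] (v : m → ℝ) {C : ℝ}
    (hC : 0 ≤ C) (h : ∀ i, |v i| ≤ C) : ‖Matrix.diagonal v‖ ≤ C := by
  rw [Matrix.l2_opNorm_def]
  refine ContinuousLinearMap.opNorm_le_bound _ hC fun x => ?_
  have hfx : ((Matrix.toEuclideanLin.trans LinearMap.toContinuousLinearMap)
      (Matrix.diagonal v)) x = (WithLp.equiv 2 (m → ℝ)).symm (Matrix.diagonal v *ᵥ x) := rfl
  rw [hfx]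
  rw [EuclideanSpace.norm_eq, EuclideanSpace.norm_eq]
  have h1 : ∀ i, ‖(WithLp.equiv 2 (m → ℝ)).symm (Matrix.diagonal v *ᵥ (x : m → ℝ)) i‖ ^ 2
      ≤ C ^ 2 * ‖x i‖ ^ 2 := by
    intro i
    have h0 : (WithLp.equiv 2 (m → ℝ)).symm (Matrix.diagonal v *ᵥ (x : m → ℝ)) i
        = v i * x i := by
      simp [Matrix.mulVec_diagonal]
    rw [h0]
    have h2 : |v i * x i| ≤ C * |x i| := by
      rw [abs_mul]
      exact mul_le_mul_of_nonneg_right (h i) (abs_nonneg _)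
    calc ‖v i * x i‖ ^ 2 = |v i * x i| ^ 2 := rfl
      _ ≤ (C * |x i|) ^ 2 := pow_le_pow_left₀ (abs_nonneg _) h2 2
      _ = C ^ 2 * ‖x i‖ ^ 2 := by rw [mul_pow]; rfl
  calc Real.sqrt (∑ i, ‖(WithLp.equiv 2 (m → ℝ)).symm (Matrix.diagonal v *ᵥ (x : m → ℝ)) i‖ ^ 2)
      ≤ Real.sqrt (∑ i, C ^ 2 * ‖x i‖ ^ 2) :=
        Real.sqrt_le_sqrt (Finset.sum_le_sum fun i _ => h1 i)
    _ = C * Real.sqrt (∑ i, ‖x i‖ ^ 2) := by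
        rw [← Finset.mul_sum, Real.sqrt_mul (sq_nonneg C), Real.sqrt_sq hC]

lemma unitary_l2_norm_one {m : Type*} [Fintype m] [DecidableEq m] [Nonempty m]
    (U : Matrix.unitaryGroup m ℝ) : ‖(U : Matrix m m ℝ)‖ = 1 := by
  have h1 : star (U : Matrix m m ℝ) * (U : Matrix m m ℝ) = 1 := Unitary.coe_star_mul_self U
  have h2 : ‖star (U : Matrix m m ℝ) * (U : Matrix m m ℝ)‖
      = ‖(U : Matrix m m ℝ)‖ * ‖(U : Matrix m m ℝ)‖ := CStarRing.norm_star_mul_self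
  rw [h1, norm_one] at h2
  nlinarith [norm_nonneg (U : Matrix m m ℝ)]

lemma eigen_le_l2_norm {n : ℕ} (S : Matrix (Fin (n + 1)) (Fin (n + 1)) ℝ) (hS : S.IsHermitian)
    (M : Matrix (Fin (n + 1)) (Fin (n + 1)) ℝ) (t : ℝ) (ht : 0 ≤ t) (j : Fin (n + 1))
    (hMv : M *ᵥ ⇑(hS.eigenvectorBasis j) = t • ⇑(hS.eigenvectorBasis j)) :
    t ≤ ‖M‖ := by
  set v := hS.eigenvectorBasis j with hv
  have hvnorm : ‖v‖ = 1 := hS.eigenvectorBasis.orthonormal.1 j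
  have hle := Matrix.l2_opNorm_mulVec M v
  rw [hvnorm, mul_one] at hle
  rw [show (M *ᵥ v : Fin (n+1) → ℝ) = t • (v : Fin (n+1) → ℝ) from hMv] at hle
  have heq : (EuclideanSpace.equiv (Fin (n+1)) ℝ).symm (t • (v : Fin (n+1) → ℝ)) = t • v := by
    ext i
    simp
  rw [heq, norm_smul, Real.norm_eq_abs, abs_of_nonneg ht, hvnorm, mul_one] at hle
  exact hle

/-- for a symmetric Σ̂ with ordered eigenvalues γ, ε > γ₁ and μ ≥ ε,
the spectral-norm distance of the FSPD update Φ(Σ̂) = α*Σ̂ + (1-α*)μI from Σ̂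
is at least ε - γ₁, with equality whenever μ ≥ max(ε, (γ_p + γ₁)/2). -/
theorem fspd_spectral_distance (n : ℕ) (S : Matrix (Fin (n + 1)) (Fin (n + 1)) ℝ)
    (hS : S.IsHermitian) (γ : Fin (n + 1) → ℝ) (hmono : Monotone γ)
    (hperm : ∃ σ : Equiv.Perm (Fin (n + 1)), γ = hS.eigenvalues ∘ σ)
    (ε μ : ℝ) (hε : γ 0 < ε) (hμ : ε ≤ μ) :
    ε - γ 0 ≤
      ‖(((μ - ε) / (μ - γ 0)) • S +
        ((1 - (μ - ε) / (μ - γ 0)) * μ) • (1 : Matrix (Fin (n + 1)) (Fin (n + 1)) ℝ)) - S‖ ∧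
    (max ε ((γ (Fin.last n) + γ 0) / 2) ≤ μ →
      ‖(((μ - ε) / (μ - γ 0)) • S +
        ((1 - (μ - ε) / (μ - γ 0)) * μ) • (1 : Matrix (Fin (n + 1)) (Fin (n + 1)) ℝ)) - S‖
        = ε - γ 0) := by
  obtain ⟨σ, hσ⟩ := hperm
  have hγμ : γ 0 < μ := lt_of_lt_of_le hε hμ
  set c : ℝ := (ε - γ 0) / (μ - γ 0) with hc
  have hμγ : (0:ℝ) < μ - γ 0 := by linarith
  have hcpos : 0 < c := div_pos (by linarith) hμγ
  have hα : (μ - ε) / (μ - γ 0) = 1 - c := by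
    rw [hc]; field_simp; ring
  have hcmul : c * (μ - γ 0) = ε - γ 0 := by
    rw [hc]; field_simp
  set M : Matrix (Fin (n + 1)) (Fin (n + 1)) ℝ := μ • 1 - S with hM
  have hE : (((μ - ε) / (μ - γ 0)) • S +
      ((1 - (μ - ε) / (μ - γ 0)) * μ) • (1 : Matrix (Fin (n + 1)) (Fin (n + 1)) ℝ)) - S
      = c • M := by
    rw [hα, hM]
    have h1 : (1 - (1 - c)) = c := by ring
    rw [h1]
    module
  rw [hE]
  have hnorm : ‖c • M‖ = c * ‖M‖ := by
    rw [norm_smul, Real.norm_eq_abs, abs_of_pos hcpos]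
  have heig : ∀ i, γ 0 ≤ hS.eigenvalues i ∧ hS.eigenvalues i ≤ γ (Fin.last n) := by
    intro i
    have h1 : hS.eigenvalues i = γ (σ.symm i) := by
      rw [hσ]; simp
    rw [h1]
    exact ⟨hmono (Fin.zero_le _), hmono (Fin.le_last _)⟩
  have hγ0 : γ 0 = hS.eigenvalues (σ 0) := by rw [hσ]; rfl
  have hMlow : μ - γ 0 ≤ ‖M‖ := by
    refine eigen_le_l2_norm S hS M (μ - γ 0) (le_of_lt hμγ) (σ 0) ?_
    rw [hM, Matrix.sub_mulVec, hS.mulVec_eigenvectorBasis, ← hγ0,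
      Matrix.smul_mulVec, Matrix.one_mulVec]
    funext i
    simp only [Pi.sub_apply, Pi.smul_apply, smul_eq_mul]
    ring
  constructor
  · rw [hnorm, ← hcmul]
    exact mul_le_mul_of_nonneg_left hMlow (le_of_lt hcpos)
  · intro hcond
    have hcond2 : γ (Fin.last n) + γ 0 ≤ 2 * μ := by
      have := le_trans (le_max_right ε _) hcond
      linarith
    have hMup : ‖M‖ ≤ μ - γ 0 := by
      have hspec : S = (hS.eigenvectorUnitary : Matrix (Fin (n+1)) (Fin (n+1)) ℝ)
          * Matrix.diagonal hS.eigenvalues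
          * star (hS.eigenvectorUnitary : Matrix (Fin (n+1)) (Fin (n+1)) ℝ) := by
        have h0 := hS.spectral_theorem
        rwa [RCLike.ofReal_real_eq_id, Function.id_comp] at h0
      have hUU : (hS.eigenvectorUnitary : Matrix (Fin (n+1)) (Fin (n+1)) ℝ)
          * star (hS.eigenvectorUnitary : Matrix (Fin (n+1)) (Fin (n+1)) ℝ) = 1 :=
        Unitary.coe_mul_star_self hS.eigenvectorUnitary
      have hone : (μ • 1 : Matrix (Fin (n+1)) (Fin (n+1)) ℝ)
          = (hS.eigenvectorUnitary : Matrix (Fin (n+1)) (Fin (n+1)) ℝ)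
          * Matrix.diagonal (fun _ => μ)
          * star (hS.eigenvectorUnitary : Matrix (Fin (n+1)) (Fin (n+1)) ℝ) := by
        rw [← Matrix.smul_one_eq_diagonal, mul_smul_comm, mul_one, smul_mul_assoc, hUU]
      have hMeq : M = (hS.eigenvectorUnitary : Matrix (Fin (n+1)) (Fin (n+1)) ℝ)
          * Matrix.diagonal (fun i => μ - hS.eigenvalues i)
          * star (hS.eigenvectorUnitary : Matrix (Fin (n+1)) (Fin (n+1)) ℝ) := by
        rw [hM]
        conv_lhs => rw [hspec, hone]
        rw [← Matrix.sub_mul, ← Matrix.mul_sub, Matrix.diagonal_sub]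
      have hUnorm : ‖(hS.eigenvectorUnitary : Matrix (Fin (n+1)) (Fin (n+1)) ℝ)‖ = 1 :=
        unitary_l2_norm_one hS.eigenvectorUnitary
      have hUstarnorm : ‖star (hS.eigenvectorUnitary : Matrix (Fin (n+1)) (Fin (n+1)) ℝ)‖ = 1 := by
        rw [Matrix.star_eq_conjTranspose, Matrix.l2_opNorm_conjTranspose, hUnorm]
      have hdiag : ‖Matrix.diagonal (fun i => μ - hS.eigenvalues i)‖ ≤ μ - γ 0 := by
        refine diag_l2_norm_le _ (le_of_lt hμγ) fun i => ?_
        obtain ⟨h1, h2⟩ := heig i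
        rw [abs_le]
        exact ⟨by linarith, by linarith⟩
      have step1 := Matrix.l2_opNorm_mul
        ((hS.eigenvectorUnitary : Matrix (Fin (n+1)) (Fin (n+1)) ℝ)
          * Matrix.diagonal (fun i => μ - hS.eigenvalues i))
        (star (hS.eigenvectorUnitary : Matrix (Fin (n+1)) (Fin (n+1)) ℝ))
      have step2 := Matrix.l2_opNorm_mul
        (hS.eigenvectorUnitary : Matrix (Fin (n+1)) (Fin (n+1)) ℝ)
        (Matrix.diagonal (fun i => μ - hS.eigenvalues i))
      rw [hUstarnorm, mul_one] at step1
      rw [hUnorm, one_mul] at step2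
      rw [hMeq]
      exact le_trans step1 (le_trans step2 hdiag)
    have hfin : ‖M‖ = μ - γ 0 := le_antisymm hMup hMlow
    rw [hnorm, hfin, hcmul]
end

section
/- Let A and B be p×p real symmetric matrices with ordered eigenvalues γ₁(A) ≤ ⋯ ≤ γ_p(A) and γ₁(B) ≤ ⋯ ≤ γ_p(B). Then Σᵢ₌₁^p (γᵢ(A) - γᵢ(B))² ≤ tr((A-B)ᵀ(A-B)). -/
open Matrix Finset

lemma trace_diag_mul {p : Type*} [Fintype p] [DecidableEq p] (d e : p → ℝ) (W : Matrix p p ℝ) :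
    trace (diagonal d * W * diagonal e * star W) = ∑ i, ∑ j, d i * e j * (W i j)^2 := by
  simp only [Matrix.trace, Matrix.diag, Matrix.mul_apply, Matrix.diagonal_apply,
    Matrix.star_apply, star_trivial, Matrix.conjTranspose_apply,
    Finset.sum_mul, Finset.mul_sum, ite_mul, zero_mul,
    Finset.sum_ite_eq', Finset.mem_univ, if_true, Finset.sum_ite_eq, mul_ite, mul_zero]
  refine Finset.sum_congr rfl fun i _ => Finset.sum_congr rfl fun j _ => by ring

lemma trace_mul_eigen {p : Type*} [Fintype p] [DecidableEq p]
    (A B : Matrix p p ℝ) (hA : A.IsHermitian) (hB : B.IsHermitian) :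
    trace (A * B) = ∑ i, ∑ j, hA.eigenvalues i * hB.eigenvalues j *
      ((star (hA.eigenvectorUnitary : Matrix p p ℝ) * (hB.eigenvectorUnitary : Matrix p p ℝ)) i j)^2 := by
  set U : Matrix p p ℝ := (hA.eigenvectorUnitary : Matrix p p ℝ) with hU
  set V : Matrix p p ℝ := (hB.eigenvectorUnitary : Matrix p p ℝ) with hV
  set W : Matrix p p ℝ := star U * V with hW
  have hDA : star U * A * U = diagonal hA.eigenvalues := by
    have := hA.conjStarAlgAut_star_eigenvectorUnitary
    simpa using this
  have hDB : star V * B * V = diagonal hB.eigenvalues := by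
    have := hB.conjStarAlgAut_star_eigenvectorUnitary
    simpa using this
  have hUU : star U * U = 1 := mem_unitaryGroup_iff'.mp hA.eigenvectorUnitary.2
  have hUU' : U * star U = 1 := mem_unitaryGroup_iff.mp hA.eigenvectorUnitary.2
  have hVV : star V * V = 1 := mem_unitaryGroup_iff'.mp hB.eigenvectorUnitary.2
  have hVV' : V * star V = 1 := mem_unitaryGroup_iff.mp hB.eigenvectorUnitary.2
  have hc1 : ∀ X : Matrix p p ℝ, U * (star U * X) = X := fun X => by
    rw [← Matrix.mul_assoc, hUU', Matrix.one_mul]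
  have hc2 : ∀ X : Matrix p p ℝ, star U * (U * X) = X := fun X => by
    rw [← Matrix.mul_assoc, hUU, Matrix.one_mul]
  have hc3 : ∀ X : Matrix p p ℝ, V * (star V * X) = X := fun X => by
    rw [← Matrix.mul_assoc, hVV', Matrix.one_mul]
  have hc4 : ∀ X : Matrix p p ℝ, star V * (V * X) = X := fun X => by
    rw [← Matrix.mul_assoc, hVV, Matrix.one_mul]
  have hsW : star W = star V * U := by rw [hW, StarMul.star_mul, star_star]
  have key : A * B = U * (diagonal hA.eigenvalues * W * diagonal hB.eigenvalues * star W) * star U := by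
    rw [← hDA, ← hDB, hsW, hW]
    simp only [Matrix.mul_assoc, hUU', hVV', hUU, hVV, Matrix.mul_one, Matrix.one_mul,
      hc1, hc2, hc3, hc4]
  rw [key, Matrix.trace_mul_comm, ← Matrix.mul_assoc, hUU, Matrix.one_mul, trace_diag_mul]

lemma sq_unitary_DS {p : Type*} [Fintype p] [DecidableEq p] (W : Matrix p p ℝ)
    (hW : W ∈ Matrix.unitaryGroup p ℝ) :
    (Matrix.of fun i j => (W i j)^2) ∈ doublyStochastic ℝ p := by
  rw [mem_doublyStochastic_iff_sum]
  have h1 : W * star W = 1 := mem_unitaryGroup_iff.mp hW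
  have h2 : star W * W = 1 := mem_unitaryGroup_iff'.mp hW
  refine ⟨fun i j => sq_nonneg _, fun i => ?_, fun j => ?_⟩
  · have := congrFun (congrFun h1 i) i
    simp only [Matrix.mul_apply, Matrix.star_apply, star_trivial, Matrix.one_apply_eq] at this
    rw [← this]
    exact Finset.sum_congr rfl fun j _ => by simp [Matrix.conjTranspose_apply]; ring
  · have := congrFun (congrFun h2 j) j
    simp only [Matrix.mul_apply, Matrix.star_apply, star_trivial, Matrix.one_apply_eq] at this
    rw [← this]
    exact Finset.sum_congr rfl fun i _ => by simp [Matrix.conjTranspose_apply]; ring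

lemma ds_bound {m : ℕ} (γA γB : Fin (m+1) → ℝ) (hA : Monotone γA) (hB : Monotone γB)
    (a b : Fin (m+1) → ℝ) (hab : ∃ π : Equiv.Perm (Fin (m+1)), a = γA ∘ π)
    (hbb : ∃ ρ : Equiv.Perm (Fin (m+1)), b = γB ∘ ρ)
    (S : Matrix (Fin (m+1)) (Fin (m+1)) ℝ) (hS : S ∈ doublyStochastic ℝ (Fin (m+1))) :
    ∑ i, ∑ j, a i * b j * S i j ≤ ∑ i, γA i * γB i := by
  obtain ⟨π, rfl⟩ := hab
  obtain ⟨ρ, rfl⟩ := hbb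
  obtain ⟨w, hw0, hw1, hSw⟩ := exists_eq_sum_perm_of_mem_doublyStochastic hS
  have hperm : ∀ σ : Equiv.Perm (Fin (m+1)),
      ∑ i, γA (π i) * γB (ρ (σ i)) ≤ ∑ i, γA i * γB i := by
    intro σ
    have h1 := Equiv.sum_comp π.symm (fun i => γA (π i) * γB (ρ (σ i)))
    have h2 : ∑ i, γA (π (π.symm i)) * γB (ρ (σ (π.symm i)))
        = ∑ i, γA i * γB ((π.symm.trans (σ.trans ρ)) i) := by
      refine Finset.sum_congr rfl fun i _ => by simp [Equiv.trans_apply]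
    rw [← h1, h2]
    exact (hA.monovary hB).sum_mul_comp_perm_le_sum_mul
  have hentry : ∀ i j, S i j = ∑ σ : Equiv.Perm (Fin (m+1)), w σ * (if σ i = j then 1 else 0) := by
    intro i j
    rw [← hSw]
    simp [Matrix.sum_apply, Equiv.Perm.permMatrix, PEquiv.toMatrix_apply, Equiv.toPEquiv_apply]
  have expand : ∑ i, ∑ j, (γA ∘ π) i * (γB ∘ ρ) j * S i j
      = ∑ σ : Equiv.Perm (Fin (m+1)), w σ * ∑ i, γA (π i) * γB (ρ (σ i)) := by
    calc ∑ i, ∑ j, (γA ∘ π) i * (γB ∘ ρ) j * S i j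
        = ∑ i, ∑ j, ∑ σ : Equiv.Perm (Fin (m+1)),
            w σ * (if σ i = j then γA (π i) * γB (ρ j) else 0) := by
          refine Finset.sum_congr rfl fun i _ => Finset.sum_congr rfl fun j _ => ?_
          rw [hentry i j, Finset.mul_sum]
          refine Finset.sum_congr rfl fun σ _ => ?_
          simp only [Function.comp_apply, mul_ite, mul_one, mul_zero]
          split_ifs <;> ring
      _ = ∑ i, ∑ σ : Equiv.Perm (Fin (m+1)), ∑ j,
            w σ * (if σ i = j then γA (π i) * γB (ρ j) else 0) :=
          Finset.sum_congr rfl fun i _ => Finset.sum_comm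
      _ = ∑ σ : Equiv.Perm (Fin (m+1)), ∑ i, ∑ j,
            w σ * (if σ i = j then γA (π i) * γB (ρ j) else 0) := Finset.sum_comm
      _ = ∑ σ : Equiv.Perm (Fin (m+1)), w σ * ∑ i, γA (π i) * γB (ρ (σ i)) := by
          refine Finset.sum_congr rfl fun σ _ => ?_
          rw [Finset.mul_sum]
          refine Finset.sum_congr rfl fun i _ => ?_
          rw [← Finset.mul_sum, Finset.sum_ite_eq Finset.univ (σ i)
            (fun j => γA (π i) * γB (ρ j))]
          simp
  rw [expand]
  calc ∑ σ : Equiv.Perm (Fin (m+1)), w σ * ∑ i, γA (π i) * γB (ρ (σ i))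
      ≤ ∑ σ : Equiv.Perm (Fin (m+1)), w σ * ∑ i, γA i * γB i := by
        refine Finset.sum_le_sum fun σ _ => mul_le_mul_of_nonneg_left (hperm σ) (hw0 σ)
    _ = ∑ i, γA i * γB i := by rw [← Finset.sum_mul, hw1, one_mul]

/-- Wielandt–Hoffman inequality: for symmetric A, B with ordered
eigenvalues γA, γB, Σᵢ (γAᵢ - γBᵢ)² ≤ tr((A-B)ᵀ(A-B)). -/
theorem wielandt_hoffman (n : ℕ) (A B : Matrix (Fin (n + 1)) (Fin (n + 1)) ℝ)
    (hA : A.IsHermitian) (hB : B.IsHermitian)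
    (γA γB : Fin (n + 1) → ℝ) (hmonoA : Monotone γA) (hmonoB : Monotone γB)
    (hpermA : ∃ σ : Equiv.Perm (Fin (n + 1)), γA = hA.eigenvalues ∘ σ)
    (hpermB : ∃ σ : Equiv.Perm (Fin (n + 1)), γB = hB.eigenvalues ∘ σ) :
    ∑ i, (γA i - γB i) ^ 2 ≤ Matrix.trace ((A - B)ᵀ * (A - B)) := by
  obtain ⟨σA, hσA⟩ := hpermA
  obtain ⟨σB, hσB⟩ := hpermB
  set U : Matrix (Fin (n+1)) (Fin (n+1)) ℝ := (hA.eigenvectorUnitary : Matrix (Fin (n+1)) (Fin (n+1)) ℝ) with hU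
  set V : Matrix (Fin (n+1)) (Fin (n+1)) ℝ := (hB.eigenvectorUnitary : Matrix (Fin (n+1)) (Fin (n+1)) ℝ) with hV
  set W : Matrix (Fin (n+1)) (Fin (n+1)) ℝ := star U * V with hW
  have hUU : star U * U = 1 := mem_unitaryGroup_iff'.mp hA.eigenvectorUnitary.2
  have hVV' : V * star V = 1 := mem_unitaryGroup_iff.mp hB.eigenvectorUnitary.2
  have hWmem : W ∈ Matrix.unitaryGroup (Fin (n+1)) ℝ := by
    rw [mem_unitaryGroup_iff]
    rw [hW, StarMul.star_mul, star_star]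
    calc star U * V * (star V * U) = star U * (V * star V) * U := by
          simp only [Matrix.mul_assoc]
      _ = 1 := by rw [hVV', Matrix.mul_one, hUU]
  -- trace of squares
  have htrA : trace (A * A) = ∑ i, hA.eigenvalues i ^ 2 := by
    rw [trace_mul_eigen A A hA hA, ← hU, hUU]
    refine Finset.sum_congr rfl fun i _ => ?_
    rw [Finset.sum_eq_single i]
    · simp [sq]
    · intro j _ hj
      simp [Matrix.one_apply, (Ne.symm hj)]
    · simp
  have htrB : trace (B * B) = ∑ i, hB.eigenvalues i ^ 2 := by
    rw [trace_mul_eigen B B hB hB, ← hV,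
      mem_unitaryGroup_iff'.mp hB.eigenvectorUnitary.2]
    refine Finset.sum_congr rfl fun i _ => ?_
    rw [Finset.sum_eq_single i]
    · simp [sq]
    · intro j _ hj
      simp [Matrix.one_apply, (Ne.symm hj)]
    · simp
  -- trace mixed bound
  have htrAB : trace (A * B) ≤ ∑ i, γA i * γB i := by
    rw [trace_mul_eigen A B hA hB, ← hU, ← hV, ← hW]
    have : ∑ i, ∑ j, hA.eigenvalues i * hB.eigenvalues j * W i j ^ 2
        = ∑ i, ∑ j, (γA ∘ σA.symm) i * (γB ∘ σB.symm) j *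
            (Matrix.of fun i j => (W i j)^2) i j := by
      refine Finset.sum_congr rfl fun i _ => Finset.sum_congr rfl fun j _ => ?_
      simp [hσA, hσB]
    rw [this]
    exact ds_bound γA γB hmonoA hmonoB _ _ ⟨σA.symm, rfl⟩ ⟨σB.symm, rfl⟩ _
      (sq_unitary_DS W hWmem)
  -- eigenvalue sums vs γ sums
  have hsumA : ∑ i, hA.eigenvalues i ^ 2 = ∑ i, γA i ^ 2 := by
    rw [← Equiv.sum_comp σA (fun i => hA.eigenvalues i ^ 2)]
    exact Finset.sum_congr rfl fun i _ => by simp [hσA]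
  have hsumB : ∑ i, hB.eigenvalues i ^ 2 = ∑ i, γB i ^ 2 := by
    rw [← Equiv.sum_comp σB (fun i => hB.eigenvalues i ^ 2)]
    exact Finset.sum_congr rfl fun i _ => by simp [hσB]
  -- expand the trace
  have hsym : (A - B)ᵀ = A - B := by
    rw [← Matrix.conjTranspose_eq_transpose_of_trivial, Matrix.conjTranspose_sub, hA, hB]
  have htr : trace ((A - B)ᵀ * (A - B))
      = trace (A * A) + trace (B * B) - 2 * trace (A * B) := by
    rw [hsym, Matrix.sub_mul, Matrix.mul_sub, Matrix.mul_sub, Matrix.trace_sub,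
      Matrix.trace_sub, Matrix.trace_sub, Matrix.trace_mul_comm B A]
    ring
  have hexp : ∑ i, (γA i - γB i) ^ 2
      = ∑ i, γA i ^ 2 + ∑ i, γB i ^ 2 - 2 * ∑ i, γA i * γB i := by
    rw [← Finset.sum_add_distrib, Finset.mul_sum, ← Finset.sum_sub_distrib]
    exact Finset.sum_congr rfl fun i _ => by ring
  rw [htr, htrA, htrB, hsumA, hsumB, hexp]
  linarith
end

section
/- Let Σ and Σ̂ be p×p real symmetric matrices, Σ with smallest eigenvalue γ₁ > ε > 0, Σ̂ with eigenvalues ŷ₁ ≤ ⋯ ≤ ŷ_p. Define the FSPD update Φ(Σ̂) = α*Σ̂ + (1-α*)μI where α* = 1 if ŷ₁ ≥ ε and α* = (μ-ε)/(μ-ŷ₁) otherwise, with μ ≥ max(ε, (ŷ₁+ŷ_p)/2). Then ‖Φ(Σ̂) - Σ‖₂ ≤ 2‖Σ̂ - Σ‖₂. -/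
open Matrix
open scoped Matrix.Norms.L2Operator

section Aux
variable {m : ℕ}

private lemma diag_norm (d : Fin (m+1) → ℝ) (c : ℝ) (hc : 0 ≤ c)
    (h : ∀ i, |d i| ≤ c) : ‖(diagonal d : Matrix (Fin (m+1)) (Fin (m+1)) ℝ)‖ ≤ c := by
  rw [l2_opNorm_def]
  refine ContinuousLinearMap.opNorm_le_bound _ hc fun x => ?_
  have hx : ((Matrix.toEuclideanLin.trans LinearMap.toContinuousLinearMap)
      (diagonal d)) x = (EuclideanSpace.equiv (Fin (m+1)) ℝ).symm (diagonal d *ᵥ x) := rfl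
  rw [hx, EuclideanSpace.norm_eq, EuclideanSpace.norm_eq, ← Real.sqrt_sq hc,
    ← Real.sqrt_mul (sq_nonneg c)]
  apply Real.sqrt_le_sqrt
  rw [Finset.mul_sum]
  apply Finset.sum_le_sum
  intro i _
  have h1 : ‖((EuclideanSpace.equiv (Fin (m+1)) ℝ).symm (diagonal d *ᵥ x)) i‖
      = ‖d i * x i‖ := by simp [mulVec_diagonal]
  rw [h1]
  have := h i
  have hx2 : (0:ℝ) ≤ |(x:Fin (m+1) → ℝ) i| := abs_nonneg _
  simp only [Real.norm_eq_abs]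
  rw [sq_abs, sq_abs, mul_pow]
  have hd2 : d i ^ 2 ≤ c ^ 2 :=
    sq_le_sq' (by linarith [(abs_le.mp (h i)).1]) (abs_le.mp (h i)).2
  exact mul_le_mul_of_nonneg_right hd2 (sq_nonneg _)

private lemma conj_norm_le (U B : Matrix (Fin (m+1)) (Fin (m+1)) ℝ)
    (hU : U ∈ Matrix.unitaryGroup (Fin (m+1)) ℝ) : ‖U * B * star U‖ ≤ ‖B‖ := by
  calc ‖U * B * star U‖ ≤ ‖U * B‖ * ‖star U‖ := l2_opNorm_mul _ _
    _ ≤ ‖U‖ * ‖B‖ * ‖star U‖ :=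
        mul_le_mul_of_nonneg_right (l2_opNorm_mul _ _) (norm_nonneg _)
    _ = ‖B‖ := by
        rw [CStarRing.norm_of_mem_unitary hU,
          CStarRing.norm_of_mem_unitary (Unitary.star_mem hU)]
        ring

private lemma quad_lower (A : Matrix (Fin (m+1)) (Fin (m+1)) ℝ) (hA : A.IsHermitian)
    (x : Fin (m+1) → ℝ) : (⨅ i, hA.eigenvalues i) * (x ⬝ᵥ x) ≤ x ⬝ᵥ (A *ᵥ x) := by
  set U : Matrix (Fin (m+1)) (Fin (m+1)) ℝ := (hA.eigenvectorUnitary : Matrix (Fin (m+1)) (Fin (m+1)) ℝ) with hUdef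
  have hUm : U ∈ Matrix.unitaryGroup (Fin (m+1)) ℝ := hA.eigenvectorUnitary.2
  have hUU : U * star U = 1 := mem_unitaryGroup_iff.mp hUm
  have hsU : star U = Uᵀ := by
    rw [star_eq_conjTranspose]; ext i j; simp
  set y : Fin (m+1) → ℝ := Uᵀ *ᵥ x with hy
  have hD : (diagonal (RCLike.ofReal ∘ hA.eigenvalues) : Matrix (Fin (m+1)) (Fin (m+1)) ℝ)
      = diagonal hA.eigenvalues := by ext i j; simp [diagonal]
  have hdot : ∀ w : Fin (m+1) → ℝ, x ⬝ᵥ (U *ᵥ w) = y ⬝ᵥ w := by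
    intro w
    rw [dotProduct_mulVec, hy, ← mulVec_transpose]
  have h1 : x ⬝ᵥ (A *ᵥ x) = y ⬝ᵥ (diagonal hA.eigenvalues *ᵥ y) := by
    conv_lhs => rw [hA.spectral_theorem, hD, Unitary.conjStarAlgAut_apply, ← hUdef]
    rw [← mulVec_mulVec, ← mulVec_mulVec, hdot, hsU]
  have h2 : x ⬝ᵥ x = y ⬝ᵥ y := by
    have : y ⬝ᵥ y = x ⬝ᵥ (U *ᵥ y) := (hdot y).symm
    rw [this, hy, mulVec_mulVec, ← hsU, hUU, one_mulVec]
  rw [h1, h2]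
  have hdiag : y ⬝ᵥ (diagonal hA.eigenvalues *ᵥ y)
      = ∑ i, hA.eigenvalues i * (y i * y i) := by
    simp only [dotProduct, mulVec_diagonal]
    exact Finset.sum_congr rfl fun i _ => by ring
  rw [hdiag, dotProduct, Finset.mul_sum]
  apply Finset.sum_le_sum
  intro i _
  have hle : (⨅ j, hA.eigenvalues j) ≤ hA.eigenvalues i :=
    ciInf_le (Finite.bddBelow_range _) i
  nlinarith [mul_self_nonneg (y i)]

private lemma weyl (Sig Shat : Matrix (Fin (m+1)) (Fin (m+1)) ℝ)
    (hSig : Sig.IsHermitian) (hShat : Shat.IsHermitian) :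
    (⨅ i, hSig.eigenvalues i) ≤ (⨅ i, hShat.eigenvalues i) + ‖Shat - Sig‖ := by
  obtain ⟨i₀, hi₀⟩ := Finite.exists_min hShat.eigenvalues
  have hvnorm : ‖hShat.eigenvectorBasis i₀‖ = 1 := hShat.eigenvectorBasis.orthonormal.1 i₀
  have hxx : (⇑(hShat.eigenvectorBasis i₀) : Fin (m+1) → ℝ) ⬝ᵥ ⇑(hShat.eigenvectorBasis i₀)
      = 1 := by
    have h := real_inner_self_eq_norm_sq (hShat.eigenvectorBasis i₀)
    rw [hvnorm] at h
    rw [PiLp.inner_apply] at h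
    simpa [dotProduct, sq] using h
  have h1 : (⇑(hShat.eigenvectorBasis i₀) : Fin (m+1) → ℝ) ⬝ᵥ
      (Shat *ᵥ ⇑(hShat.eigenvectorBasis i₀)) = hShat.eigenvalues i₀ := by
    rw [hShat.mulVec_eigenvectorBasis i₀, dotProduct_smul, smul_eq_mul, hxx, mul_one]
  have h2 : (⇑(hShat.eigenvectorBasis i₀) : Fin (m+1) → ℝ) ⬝ᵥ
      ((Sig - Shat) *ᵥ ⇑(hShat.eigenvectorBasis i₀)) ≤ ‖Shat - Sig‖ := by
    set v := hShat.eigenvectorBasis i₀ with hv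
    set w : EuclideanSpace ℝ (Fin (m+1)) :=
      (EuclideanSpace.equiv (Fin (m+1)) ℝ).symm ((Sig - Shat) *ᵥ ⇑v) with hw
    have hcs : (inner ℝ v w : ℝ) ≤ ‖v‖ * ‖w‖ := real_inner_le_norm _ _
    have hmv : ‖w‖ ≤ ‖Sig - Shat‖ * ‖v‖ := (Sig - Shat).l2_opNorm_mulVec v
    have hiw : (inner ℝ v w : ℝ) = (⇑v : Fin (m+1) → ℝ) ⬝ᵥ ((Sig - Shat) *ᵥ ⇑v) := by
      simp [PiLp.inner_apply, dotProduct, hw, mul_comm]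
    rw [← hiw, ← norm_sub_rev]
    calc (inner ℝ v w : ℝ) ≤ ‖v‖ * ‖w‖ := hcs
      _ ≤ 1 * (‖Sig - Shat‖ * 1) := by
          rw [hvnorm]; rw [hvnorm, mul_one] at hmv
          simpa using hmv
      _ = ‖Sig - Shat‖ := by ring
  have h3 := quad_lower Sig hSig ⇑(hShat.eigenvectorBasis i₀)
  rw [hxx, mul_one] at h3
  have hsplit : (⇑(hShat.eigenvectorBasis i₀) : Fin (m+1) → ℝ) ⬝ᵥ
        (Sig *ᵥ ⇑(hShat.eigenvectorBasis i₀))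
      = (⇑(hShat.eigenvectorBasis i₀) : Fin (m+1) → ℝ) ⬝ᵥ (Shat *ᵥ ⇑(hShat.eigenvectorBasis i₀))
        + (⇑(hShat.eigenvectorBasis i₀) : Fin (m+1) → ℝ) ⬝ᵥ
          ((Sig - Shat) *ᵥ ⇑(hShat.eigenvectorBasis i₀)) := by
    rw [sub_mulVec, dotProduct_sub]; ring
  have hinf : (⨅ i, hShat.eigenvalues i) = hShat.eigenvalues i₀ :=
    le_antisymm (ciInf_le (Finite.bddBelow_range _) i₀) (le_ciInf hi₀)
  rw [hinf]
  linarith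

end Aux

/-- Theorem 2 of the paper: with γ₁(Σ) > ε > 0, the FSPD update
Φ(Σ̂) = α*Σ̂ + (1-α*)μI (α* = 1 if ŷ₁ ≥ ε, else (μ-ε)/(μ-ŷ₁); μ ≥ max(ε,(ŷ₁+ŷ_p)/2))
satisfies ‖Φ(Σ̂) - Σ‖₂ ≤ 2‖Σ̂ - Σ‖₂. -/
theorem fspd_spectral_rate (n : ℕ)
    (Sig Shat : Matrix (Fin (n + 1)) (Fin (n + 1)) ℝ)
    (hSig : Sig.IsHermitian) (hShat : Shat.IsHermitian)
    (ε μ y1 yp α : ℝ) (hε0 : 0 < ε) (hε1 : ε < ⨅ i, hSig.eigenvalues i)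
    (hy1 : y1 = ⨅ i, hShat.eigenvalues i) (hyp : yp = ⨆ i, hShat.eigenvalues i)
    (hμ : max ε ((y1 + yp) / 2) ≤ μ)
    (hα : α = if ε ≤ y1 then 1 else (μ - ε) / (μ - y1)) :
    ‖(α • Shat + ((1 - α) * μ) • (1 : Matrix (Fin (n + 1)) (Fin (n + 1)) ℝ)) - Sig‖
      ≤ 2 * ‖Shat - Sig‖ := by
  by_cases hcase : ε ≤ y1
  · have hα1 : α = 1 := by rw [hα, if_pos hcase]
    rw [hα1]
    simp only [one_smul, sub_self, zero_mul, zero_smul, add_zero]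
    have := norm_nonneg (Shat - Sig)
    linarith
  · push_neg at hcase
    have hα' : α = (μ - ε) / (μ - y1) := by rw [hα, if_neg (not_le.mpr hcase)]
    have hμε : ε ≤ μ := le_trans (le_max_left _ _) hμ
    have hμy0 : 0 < μ - y1 := by linarith
    have h1α : 1 - α = (ε - y1) / (μ - y1) := by
      rw [hα']; field_simp; ring
    have hsplit : (α • Shat + ((1 - α) * μ) • (1 : Matrix (Fin (n + 1)) (Fin (n + 1)) ℝ)) - Sig
        = ((1 - α) • (μ • (1 : Matrix (Fin (n + 1)) (Fin (n + 1)) ℝ) - Shat)) + (Shat - Sig) := by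
      module
    have hM : ‖μ • (1 : Matrix (Fin (n + 1)) (Fin (n + 1)) ℝ) - Shat‖ ≤ μ - y1 := by
      set U : Matrix (Fin (n+1)) (Fin (n+1)) ℝ := (hShat.eigenvectorUnitary : Matrix (Fin (n+1)) (Fin (n+1)) ℝ) with hUdef
      have hUm : U ∈ Matrix.unitaryGroup (Fin (n+1)) ℝ := hShat.eigenvectorUnitary.2
      have hUU : U * star U = 1 := mem_unitaryGroup_iff.mp hUm
      have hD : (diagonal (RCLike.ofReal ∘ hShat.eigenvalues)
          : Matrix (Fin (n+1)) (Fin (n+1)) ℝ) = diagonal hShat.eigenvalues := by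
        ext i j; simp [diagonal]
      have hdec : μ • (1 : Matrix (Fin (n + 1)) (Fin (n + 1)) ℝ) - Shat
          = U * diagonal (fun i => μ - hShat.eigenvalues i) * star U := by
        have hdd : (diagonal (fun i => μ - hShat.eigenvalues i)
            : Matrix (Fin (n+1)) (Fin (n+1)) ℝ)
            = μ • 1 - diagonal hShat.eigenvalues := by
          rw [smul_one_eq_diagonal, diagonal_sub]
        rw [hdd, Matrix.mul_sub, Matrix.sub_mul]
        conv_lhs => rw [hShat.spectral_theorem, hD, Unitary.conjStarAlgAut_apply, ← hUdef]
        congr 1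
        rw [mul_smul_comm, Matrix.mul_one, smul_mul_assoc, hUU]
      rw [hdec]
      refine le_trans (conj_norm_le _ _ hUm) (diag_norm _ _ (le_of_lt hμy0) ?_)
      intro i
      have hlow : y1 ≤ hShat.eigenvalues i := hy1 ▸ ciInf_le (Finite.bddBelow_range _) i
      have hhigh : hShat.eigenvalues i ≤ yp := hyp ▸ le_ciSup (Finite.bddAbove_range _) i
      have h2μ : (y1 + yp) / 2 ≤ μ := le_trans (le_max_right _ _) hμ
      rw [abs_le]
      constructor <;> linarith
    have key : ‖(1 - α) • (μ • (1 : Matrix (Fin (n + 1)) (Fin (n + 1)) ℝ) - Shat)‖ ≤ ε - y1 := by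
      rw [norm_smul, Real.norm_eq_abs, h1α, abs_div, abs_of_pos hμy0,
        abs_of_nonneg (by linarith : (0:ℝ) ≤ ε - y1)]
      calc (ε - y1) / (μ - y1) * ‖μ • (1 : Matrix (Fin (n + 1)) (Fin (n + 1)) ℝ) - Shat‖
          ≤ (ε - y1) / (μ - y1) * (μ - y1) :=
            mul_le_mul_of_nonneg_left hM (div_nonneg (by linarith) (le_of_lt hμy0))
        _ = ε - y1 := by field_simp
    have hW := weyl Sig Shat hSig hShat
    rw [← hy1] at hW
    have hεN : ε - y1 ≤ ‖Shat - Sig‖ := by linarith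
    calc ‖(α • Shat + ((1 - α) * μ) • (1 : Matrix (Fin (n + 1)) (Fin (n + 1)) ℝ)) - Sig‖
        = ‖((1 - α) • (μ • (1 : Matrix (Fin (n + 1)) (Fin (n + 1)) ℝ) - Shat)) + (Shat - Sig)‖ := by
          rw [hsplit]
      _ ≤ ‖(1 - α) • (μ • (1 : Matrix (Fin (n + 1)) (Fin (n + 1)) ℝ) - Shat)‖ + ‖Shat - Sig‖ :=
          norm_add_le _ _
      _ ≤ 2 * ‖Shat - Sig‖ := by linarith
end

section
/- Let Σ̂ and Σ be p×p real symmetric matrices with ordered eigenvalues ŷᵢ and γᵢ, let 0 < ε ≤ γ₁, and suppose |ŷ₁ - γ₁| ≤ C·√(Σᵢ(ŷᵢ - γᵢ)²/p) for a constant C ≥ 0. Then with Φ as in the FSPD procedure (α* = (μ-ε)/(μ-ŷ₁) when ŷ₁ < ε, α*=1 otherwise, μ ≥ max(ε,(ŷ₁+ŷ_p)/2)), ‖Φ(Σ̂) - Σ‖_F ≤ (1 + C)·‖Σ̂ - Σ‖_F, where ‖·‖_F is the scaled Frobenius norm. -/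
open Matrix Finset

/-- Scaled Frobenius norm ‖A‖_F = √(tr(AᵀA)/p). -/
noncomputable def frobSc {p : ℕ} (A : Matrix (Fin p) (Fin p) ℝ) : ℝ :=
  Real.sqrt (Matrix.trace (Aᵀ * A) / p)

section aux

variable {m : ℕ}

lemma ds_rearrange (S : Matrix (Fin m) (Fin m) ℝ)
    (hS : S ∈ doublyStochastic ℝ (Fin m)) (a b : Fin m → ℝ)
    (ha : Monotone a) (hb : Monotone b) :
    ∑ i, ∑ j, S i j * (a i * b j) ≤ ∑ i, a i * b i := by
  obtain ⟨w, hw0, hw1, hwS⟩ := exists_eq_sum_perm_of_mem_doublyStochastic hS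
  have key : ∀ σ : Equiv.Perm (Fin m),
      ∑ i, ∑ j, (σ.permMatrix ℝ) i j * (a i * b j) ≤ ∑ i, a i * b i := by
    intro σ
    have h1 : ∀ i, ∑ j, (σ.permMatrix ℝ) i j * (a i * b j) = a i * b (σ i) := by
      intro i
      rw [Finset.sum_eq_single (σ i)]
      · simp [Equiv.Perm.permMatrix, PEquiv.toMatrix, Equiv.toPEquiv]
      · intro j _ hj
        simp [Equiv.Perm.permMatrix, PEquiv.toMatrix, Equiv.toPEquiv, hj.symm]
      · simp
    simp_rw [h1]
    exact (ha.monovary hb).sum_mul_comp_perm_le_sum_mul (σ := σ)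
  calc ∑ i, ∑ j, S i j * (a i * b j)
      = ∑ σ : Equiv.Perm (Fin m), w σ * ∑ i, ∑ j, (σ.permMatrix ℝ) i j * (a i * b j) := by
        rw [← hwS]
        simp only [Matrix.sum_apply, Matrix.smul_apply, smul_eq_mul, Finset.sum_mul]
        have sw : ∀ i : Fin m,
            (∑ j, ∑ σ : Equiv.Perm (Fin m), w σ * (σ.permMatrix ℝ) i j * (a i * b j))
            = ∑ σ : Equiv.Perm (Fin m), ∑ j, w σ * (σ.permMatrix ℝ) i j * (a i * b j) :=
          fun i => Finset.sum_comm
        simp_rw [sw]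
        rw [Finset.sum_comm]
        simp_rw [Finset.mul_sum, mul_assoc]
    _ ≤ ∑ σ : Equiv.Perm (Fin m), w σ * ∑ i, a i * b i := by
        apply Finset.sum_le_sum
        intro σ _
        exact mul_le_mul_of_nonneg_left (key σ) (hw0 σ)
    _ = ∑ i, a i * b i := by rw [← Finset.sum_mul, hw1, one_mul]

lemma real_spectral {A : Matrix (Fin m) (Fin m) ℝ} (hA : A.IsHermitian) :
    A = (hA.eigenvectorUnitary : Matrix (Fin m) (Fin m) ℝ) * diagonal hA.eigenvalues
        * star (hA.eigenvectorUnitary : Matrix (Fin m) (Fin m) ℝ) := by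
  simpa using hA.spectral_theorem

lemma trace_mul_herm {A B : Matrix (Fin m) (Fin m) ℝ}
    (hA : A.IsHermitian) (hB : B.IsHermitian) :
    ∃ S : Matrix (Fin m) (Fin m) ℝ, S ∈ doublyStochastic ℝ (Fin m) ∧
      trace (A * B) = ∑ i, ∑ j, S i j * (hA.eigenvalues i * hB.eigenvalues j) := by
  set U : Matrix (Fin m) (Fin m) ℝ := (hA.eigenvectorUnitary : Matrix (Fin m) (Fin m) ℝ) with hU
  set V : Matrix (Fin m) (Fin m) ℝ := (hB.eigenvectorUnitary : Matrix (Fin m) (Fin m) ℝ) with hV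
  set W : Matrix (Fin m) (Fin m) ℝ := star U * V with hW
  have hWmem : W ∈ Matrix.unitaryGroup (Fin m) ℝ :=
    mul_mem (Unitary.star_mem (hA.eigenvectorUnitary).2) (hB.eigenvectorUnitary).2
  have hW1 : W * star W = 1 := (Matrix.mem_unitaryGroup_iff).mp hWmem
  have hW2 : star W * W = 1 := (Matrix.mem_unitaryGroup_iff').mp hWmem
  refine ⟨Matrix.of (fun i j => (W i j) ^ 2), ?_, ?_⟩
  · rw [mem_doublyStochastic_iff_sum]
    refine ⟨fun i j => by simpa using sq_nonneg (W i j), fun i => ?_, fun j => ?_⟩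
    · have h := congrFun (congrFun hW1 i) i
      simp only [Matrix.mul_apply, Matrix.one_apply_eq, conjTranspose_apply, star_trivial] at h
      simpa [sq] using h
    · have h := congrFun (congrFun hW2 j) j
      simp only [Matrix.mul_apply, Matrix.one_apply_eq, conjTranspose_apply, star_trivial] at h
      simpa [sq] using h
  · have h1 : A * B = U * (diagonal hA.eigenvalues * star U *
        (V * diagonal hB.eigenvalues * star V)) := by
      conv_lhs => rw [real_spectral hA, real_spectral hB]
      simp only [Matrix.mul_assoc]
      rfl
    rw [h1, Matrix.trace_mul_comm]
    have h2 : diagonal hA.eigenvalues * star U * (V * diagonal hB.eigenvalues * star V) * U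
        = diagonal hA.eigenvalues * (W * diagonal hB.eigenvalues * star W) := by
      rw [hW, Matrix.star_mul, star_star]
      simp only [Matrix.mul_assoc]
    rw [h2]
    have hMe : ∀ i, (W * diagonal hB.eigenvalues * star W) i i
        = ∑ j, hB.eigenvalues j * (W i j) ^ 2 := by
      intro i
      rw [Matrix.mul_apply]
      refine Finset.sum_congr rfl fun j _ => ?_
      rw [Matrix.mul_diagonal, Matrix.star_apply, star_trivial]
      ring
    rw [Matrix.trace]
    refine Finset.sum_congr rfl fun i _ => ?_
    rw [Matrix.diag_apply, Matrix.diagonal_mul, hMe, Finset.mul_sum]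
    refine Finset.sum_congr rfl fun j _ => ?_
    simp only [Matrix.of_apply]
    ring

lemma herm_transpose {M : Matrix (Fin m) (Fin m) ℝ} (hM : M.IsHermitian) : Mᵀ = M := by
  rw [← conjTranspose_eq_transpose_of_trivial]; exact hM

lemma trace_conj_sq {U : Matrix (Fin m) (Fin m) ℝ} (hU : U ∈ Matrix.unitaryGroup (Fin m) ℝ)
    (d : Fin m → ℝ) :
    trace ((U * diagonal d * star U) * (U * diagonal d * star U)) = ∑ i, d i ^ 2 := by
  have hUU : star U * U = 1 := (Matrix.mem_unitaryGroup_iff').mp hU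
  have h : (U * diagonal d * star U) * (U * diagonal d * star U)
      = U * (diagonal d * diagonal d) * star U := by
    calc (U * diagonal d * star U) * (U * diagonal d * star U)
        = U * diagonal d * (star U * U) * diagonal d * star U := by
          simp only [Matrix.mul_assoc]
      _ = U * (diagonal d * diagonal d) * star U := by
          rw [hUU, Matrix.mul_one]; simp only [Matrix.mul_assoc]
  rw [h, Matrix.trace_mul_cycle, ← Matrix.mul_assoc, hUU, Matrix.one_mul,
    diagonal_mul_diagonal, trace_diagonal]
  exact Finset.sum_congr rfl fun i _ => (sq (d i)).symm

lemma rep_shift {M : Matrix (Fin m) (Fin m) ℝ} (hM : M.IsHermitian) (c : ℝ) :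
    c • (1 : Matrix (Fin m) (Fin m) ℝ) - M
      = (hM.eigenvectorUnitary : Matrix (Fin m) (Fin m) ℝ)
        * diagonal (fun i => c - hM.eigenvalues i)
        * star (hM.eigenvectorUnitary : Matrix (Fin m) (Fin m) ℝ) := by
  set U : Matrix (Fin m) (Fin m) ℝ := (hM.eigenvectorUnitary : Matrix (Fin m) (Fin m) ℝ)
  have hUU : U * star U = 1 := (Matrix.mem_unitaryGroup_iff).mp (hM.eigenvectorUnitary).2
  have hd : diagonal (fun i => c - hM.eigenvalues i)
      = c • (1 : Matrix (Fin m) (Fin m) ℝ) - diagonal hM.eigenvalues := by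
    rw [← diagonal_one, ← diagonal_smul, diagonal_sub]
    funext i
    simp
  rw [hd, Matrix.mul_sub, Matrix.sub_mul, Matrix.mul_smul, Matrix.smul_mul, Matrix.mul_one,
    hUU, ← real_spectral hM]

lemma trace_shift_sq {M : Matrix (Fin m) (Fin m) ℝ} (hM : M.IsHermitian) (c : ℝ) :
    trace ((c • (1 : Matrix (Fin m) (Fin m) ℝ) - M)ᵀ * (c • 1 - M))
      = ∑ i, (c - hM.eigenvalues i) ^ 2 := by
  have h : (c • (1 : Matrix (Fin m) (Fin m) ℝ) - M).IsHermitian := by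
    simp [Matrix.IsHermitian, conjTranspose_sub, conjTranspose_smul, hM.eq, herm_transpose hM]
  rw [herm_transpose h, rep_shift hM c]
  exact trace_conj_sq (hM.eigenvectorUnitary).2 _

lemma trace_self_sq {M : Matrix (Fin m) (Fin m) ℝ} (hM : M.IsHermitian) :
    trace (Mᵀ * M) = ∑ i, hM.eigenvalues i ^ 2 := by
  have := trace_shift_sq hM 0
  simp only [zero_smul, zero_sub, transpose_neg, Matrix.neg_mul, Matrix.mul_neg, neg_neg,
    zero_sub, neg_sq] at this
  exact this

lemma sqrt_sum_sq_add {ι : Type*} [Fintype ι] (x y : ι → ℝ) :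
    Real.sqrt (∑ i, (x i + y i) ^ 2)
      ≤ Real.sqrt (∑ i, x i ^ 2) + Real.sqrt (∑ i, y i ^ 2) := by
  have h := norm_add_le ((EuclideanSpace.equiv ι ℝ).symm x) ((EuclideanSpace.equiv ι ℝ).symm y)
  simpa [EuclideanSpace.norm_eq, sq_abs] using h

lemma trace_transpose_mul_self {p : ℕ} (A : Matrix (Fin p) (Fin p) ℝ) :
    Matrix.trace (Aᵀ * A) = ∑ ij : Fin p × Fin p, (A ij.1 ij.2) ^ 2 := by
  rw [Fintype.sum_prod_type]
  rw [Matrix.trace]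
  simp only [Matrix.diag_apply, Matrix.mul_apply, Matrix.transpose_apply, ← sq]
  exact Finset.sum_comm

lemma frobSc_eq {p : ℕ} (A : Matrix (Fin p) (Fin p) ℝ) :
    frobSc A = Real.sqrt (∑ ij : Fin p × Fin p, (A ij.1 ij.2) ^ 2) / Real.sqrt p := by
  rw [frobSc, trace_transpose_mul_self, Real.sqrt_div (by positivity)]

lemma frobSc_triangle {p : ℕ} (X Y : Matrix (Fin p) (Fin p) ℝ) :
    frobSc (X + Y) ≤ frobSc X + frobSc Y := by
  simp only [frobSc_eq]
  rw [← add_div]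
  gcongr
  simpa using sqrt_sum_sq_add (fun ij : Fin p × Fin p => X ij.1 ij.2)
    (fun ij : Fin p × Fin p => Y ij.1 ij.2)

end aux

/-- Theorem 3 of the paper, quantitative form: if 0 < ε ≤ γ₁ and
|ŷ₁ - γ₁| ≤ C√(Σᵢ(ŷᵢ-γᵢ)²/p), then the FSPD update satisfies
‖Φ(Σ̂) - Σ‖_F ≤ (1+C)‖Σ̂ - Σ‖_F in the scaled Frobenius norm. -/
theorem fspd_frobenius_rate (n : ℕ)
    (Sig Shat : Matrix (Fin (n + 1)) (Fin (n + 1)) ℝ)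
    (hSig : Sig.IsHermitian) (hShat : Shat.IsHermitian)
    (g y : Fin (n + 1) → ℝ) (hmonog : Monotone g) (hmonoy : Monotone y)
    (hpermg : ∃ σ : Equiv.Perm (Fin (n + 1)), g = hSig.eigenvalues ∘ σ)
    (hpermy : ∃ σ : Equiv.Perm (Fin (n + 1)), y = hShat.eigenvalues ∘ σ)
    (ε μ α C : ℝ) (hε0 : 0 < ε) (hε1 : ε ≤ g 0) (hC : 0 ≤ C)
    (hA2 : |y 0 - g 0| ≤ C * Real.sqrt ((∑ i, (y i - g i) ^ 2) / (n + 1)))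
    (hμ : max ε ((y 0 + y (Fin.last n)) / 2) ≤ μ)
    (hα : α = if ε ≤ y 0 then 1 else (μ - ε) / (μ - y 0)) :
    frobSc ((α • Shat + ((1 - α) * μ) • (1 : Matrix (Fin (n + 1)) (Fin (n + 1)) ℝ)) - Sig)
      ≤ (1 + C) * frobSc (Shat - Sig) := by
  obtain ⟨σg, hg⟩ := hpermg
  obtain ⟨σy, hy⟩ := hpermy
  have hyi : ∀ i, y i = hShat.eigenvalues (σy i) := fun i => congrFun hy i
  have hgi : ∀ i, g i = hSig.eigenvalues (σg i) := fun i => congrFun hg i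
  -- sums of squares of eigenvalues
  have hsum_y : ∑ i, hShat.eigenvalues i ^ 2 = ∑ i, y i ^ 2 := by
    rw [← Equiv.sum_comp σy (fun i => hShat.eigenvalues i ^ 2)]
    exact Finset.sum_congr rfl fun i _ => by rw [hyi]
  have hsum_g : ∑ i, hSig.eigenvalues i ^ 2 = ∑ i, g i ^ 2 := by
    rw [← Equiv.sum_comp σg (fun i => hSig.eigenvalues i ^ 2)]
    exact Finset.sum_congr rfl fun i _ => by rw [hgi]
  -- trace bound (Wielandt–Hoffman ingredient)
  obtain ⟨S, hSds, hStr⟩ := trace_mul_herm hShat hSig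
  have htr : trace (Shat * Sig) ≤ ∑ i, y i * g i := by
    rw [hStr]
    have hre : ∑ i, ∑ j, S i j * (hShat.eigenvalues i * hSig.eigenvalues j)
        = ∑ i, ∑ j,
          (Matrix.of fun i j => S (σy i) (σg j)) i j * (y i * g j) := by
      rw [← Equiv.sum_comp σy
        (fun i => ∑ j, S i j * (hShat.eigenvalues i * hSig.eigenvalues j))]
      refine Finset.sum_congr rfl fun i _ => ?_
      rw [← Equiv.sum_comp σg
        (fun j => S (σy i) j * (hShat.eigenvalues (σy i) * hSig.eigenvalues j))]
      refine Finset.sum_congr rfl fun j _ => ?_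
      simp only [Matrix.of_apply, hyi, hgi]
    rw [hre]
    have hS' : (Matrix.of fun i j => S (σy i) (σg j))
        ∈ doublyStochastic ℝ (Fin (n + 1)) := by
      rw [mem_doublyStochastic_iff_sum] at hSds ⊢
      obtain ⟨h0, hrow, hcol⟩ := hSds
      refine ⟨fun i j => h0 _ _, fun i => ?_, fun j => ?_⟩
      · simp only [Matrix.of_apply]
        rw [Equiv.sum_comp σg (fun j => S (σy i) j)]
        exact hrow _
      · simp only [Matrix.of_apply]
        rw [Equiv.sum_comp σy (fun i => S i (σg j))]
        exact hcol _
    exact ds_rearrange _ hS' y g hmonoy hmonog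
  -- trace of squared difference
  have e1 : trace (Shat * Shat) = ∑ i, hShat.eigenvalues i ^ 2 := by
    have h := trace_self_sq hShat
    rwa [herm_transpose hShat] at h
  have e2 : trace (Sig * Sig) = ∑ i, hSig.eigenvalues i ^ 2 := by
    have h := trace_self_sq hSig
    rwa [herm_transpose hSig] at h
  have hexp : trace ((Shat - Sig)ᵀ * (Shat - Sig))
      = ∑ i, y i ^ 2 + ∑ i, g i ^ 2 - 2 * trace (Shat * Sig) := by
    rw [transpose_sub, herm_transpose hShat, herm_transpose hSig, Matrix.sub_mul,
      Matrix.mul_sub, Matrix.mul_sub, trace_sub, trace_sub, trace_sub, e1, e2,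
      Matrix.trace_mul_comm Sig Shat, hsum_y, hsum_g]
    ring
  have hsq_expand : ∑ i, (y i - g i) ^ 2
      = ∑ i, y i ^ 2 + ∑ i, g i ^ 2 - 2 * ∑ i, y i * g i := by
    rw [Finset.mul_sum, ← Finset.sum_add_distrib, ← Finset.sum_sub_distrib]
    exact Finset.sum_congr rfl fun i _ => by ring
  have key1 : Real.sqrt ((∑ i, (y i - g i) ^ 2) / (n + 1)) ≤ frobSc (Shat - Sig) := by
    rw [frobSc]
    apply Real.sqrt_le_sqrt
    have hnum : ∑ i, (y i - g i) ^ 2 ≤ trace ((Shat - Sig)ᵀ * (Shat - Sig)) := by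
      rw [hexp, hsq_expand]; linarith
    have : ((n : ℝ) + 1) = ((n + 1 : ℕ) : ℝ) := by push_cast; ring
    rw [this]
    gcongr
  have hfrob_nonneg : 0 ≤ frobSc (Shat - Sig) := Real.sqrt_nonneg _
  -- bound on the perturbation term
  have key2 : frobSc ((α • Shat + ((1 - α) * μ) • (1 : Matrix (Fin (n + 1)) (Fin (n + 1)) ℝ))
      - Shat) ≤ C * frobSc (Shat - Sig) := by
    by_cases hcase : ε ≤ y 0
    · rw [hα, if_pos hcase]
      have : ((1 : ℝ) • Shat + ((1 - 1) * μ) • (1 : Matrix (Fin (n + 1)) (Fin (n + 1)) ℝ))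
          - Shat = 0 := by
        simp
      rw [this]
      have : frobSc (0 : Matrix (Fin (n + 1)) (Fin (n + 1)) ℝ) = 0 := by
        simp [frobSc]
      rw [this]
      positivity
    · push_neg at hcase
      have hεμ : ε ≤ μ := le_trans (le_max_left _ _) hμ
      have hmid : (y 0 + y (Fin.last n)) / 2 ≤ μ := le_trans (le_max_right _ _) hμ
      have hμy : 0 < μ - y 0 := by linarith
      have hβ : 1 - α = (ε - y 0) / (μ - y 0) := by
        rw [hα, if_neg (not_le.mpr hcase)]
        field_simp
        ring
      have hβnn : 0 ≤ 1 - α := by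
        rw [hβ]; exact div_nonneg (by linarith) (by linarith)
      have hβmul : (1 - α) * (μ - y 0) = ε - y 0 := by
        rw [hβ]; field_simp
      have hmat : (α • Shat + ((1 - α) * μ) • (1 : Matrix (Fin (n + 1)) (Fin (n + 1)) ℝ))
          - Shat = (1 - α) • (μ • (1 : Matrix (Fin (n + 1)) (Fin (n + 1)) ℝ) - Shat) := by
        rw [smul_sub, smul_smul]
        module
      have htr2 : trace (((1 - α) • (μ • (1 : Matrix (Fin (n + 1)) (Fin (n + 1)) ℝ) - Shat))ᵀ
          * ((1 - α) • (μ • (1 : Matrix (Fin (n + 1)) (Fin (n + 1)) ℝ) - Shat)))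
          = (1 - α) ^ 2 * ∑ i, (μ - y i) ^ 2 := by
        rw [transpose_smul, Matrix.smul_mul, Matrix.mul_smul, trace_smul, trace_smul,
          trace_shift_sq hShat μ, smul_eq_mul, smul_eq_mul]
        rw [← Equiv.sum_comp σy (fun i => (μ - hShat.eigenvalues i) ^ 2)]
        have : ∑ i, (μ - hShat.eigenvalues (σy i)) ^ 2 = ∑ i, (μ - y i) ^ 2 :=
          Finset.sum_congr rfl fun i _ => by rw [hyi]
        rw [this]; ring
      have hbound : ∀ i, ((1 - α) * (μ - y i)) ^ 2 ≤ (ε - y 0) ^ 2 := by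
        intro i
        have hy0 : y 0 ≤ y i := hmonoy (Fin.zero_le i)
        have hyl : y i ≤ y (Fin.last n) := hmonoy (Fin.le_last i)
        apply sq_le_sq'
        · have h1 : -(μ - y 0) ≤ μ - y i := by linarith
          have := mul_le_mul_of_nonneg_left h1 hβnn
          calc -(ε - y 0) = (1 - α) * (-(μ - y 0)) := by rw [← hβmul]; ring
            _ ≤ (1 - α) * (μ - y i) := this
        · have h1 : μ - y i ≤ μ - y 0 := by linarith
          have := mul_le_mul_of_nonneg_left h1 hβnn
          calc (1 - α) * (μ - y i) ≤ (1 - α) * (μ - y 0) := this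
            _ = ε - y 0 := hβmul
      have hsum : (1 - α) ^ 2 * ∑ i, (μ - y i) ^ 2 ≤ (n + 1) * (ε - y 0) ^ 2 := by
        rw [Finset.mul_sum]
        calc ∑ i, (1 - α) ^ 2 * (μ - y i) ^ 2
            = ∑ i, ((1 - α) * (μ - y i)) ^ 2 :=
              Finset.sum_congr rfl fun i _ => by ring
          _ ≤ ∑ _i : Fin (n + 1), (ε - y 0) ^ 2 := Finset.sum_le_sum fun i _ => hbound i
          _ = (n + 1) * (ε - y 0) ^ 2 := by
              rw [Finset.sum_const, Finset.card_univ, Fintype.card_fin, nsmul_eq_mul]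
              push_cast; ring
      have hδ : 0 ≤ ε - y 0 := by linarith
      have hfs : frobSc ((α • Shat + ((1 - α) * μ) • (1 : Matrix (Fin (n + 1)) (Fin (n + 1)) ℝ))
          - Shat) ≤ ε - y 0 := by
        rw [hmat, frobSc, htr2]
        have hp : (0 : ℝ) < ((n + 1 : ℕ) : ℝ) := by positivity
        have hdiv : (1 - α) ^ 2 * (∑ i, (μ - y i) ^ 2) / ((n + 1 : ℕ) : ℝ)
            ≤ (ε - y 0) ^ 2 := by
          rw [div_le_iff₀ hp]
          push_cast
          calc (1 - α) ^ 2 * ∑ i, (μ - y i) ^ 2 ≤ ((n : ℝ) + 1) * (ε - y 0) ^ 2 := hsum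
            _ = (ε - y 0) ^ 2 * ((n : ℝ) + 1) := by ring
        calc Real.sqrt ((1 - α) ^ 2 * (∑ i, (μ - y i) ^ 2) / ((n + 1 : ℕ) : ℝ))
            ≤ Real.sqrt ((ε - y 0) ^ 2) := Real.sqrt_le_sqrt hdiv
          _ = ε - y 0 := Real.sqrt_sq hδ
      have habs : ε - y 0 ≤ |y 0 - g 0| := by
        rw [abs_sub_comm]
        calc ε - y 0 ≤ g 0 - y 0 := by linarith
          _ ≤ |g 0 - y 0| := le_abs_self _
      calc frobSc ((α • Shat + ((1 - α) * μ) • (1 : Matrix (Fin (n + 1)) (Fin (n + 1)) ℝ))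
            - Shat) ≤ ε - y 0 := hfs
        _ ≤ |y 0 - g 0| := habs
        _ ≤ C * Real.sqrt ((∑ i, (y i - g i) ^ 2) / (n + 1)) := hA2
        _ ≤ C * frobSc (Shat - Sig) := mul_le_mul_of_nonneg_left key1 hC
  -- triangle inequality and conclusion
  have tri : frobSc ((α • Shat + ((1 - α) * μ) • (1 : Matrix (Fin (n + 1)) (Fin (n + 1)) ℝ))
      - Sig) ≤ frobSc ((α • Shat + ((1 - α) * μ) • (1 : Matrix (Fin (n + 1)) (Fin (n + 1)) ℝ))
      - Shat) + frobSc (Shat - Sig) := by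
    have hsplit : (α • Shat + ((1 - α) * μ) • (1 : Matrix (Fin (n + 1)) (Fin (n + 1)) ℝ)) - Sig
        = ((α • Shat + ((1 - α) * μ) • (1 : Matrix (Fin (n + 1)) (Fin (n + 1)) ℝ)) - Shat)
          + (Shat - Sig) := by
      abel
    rw [hsplit]
    exact frobSc_triangle _ _
  calc frobSc ((α • Shat + ((1 - α) * μ) • (1 : Matrix (Fin (n + 1)) (Fin (n + 1)) ℝ)) - Sig)
      ≤ frobSc ((α • Shat + ((1 - α) * μ) • (1 : Matrix (Fin (n + 1)) (Fin (n + 1)) ℝ))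
        - Shat) + frobSc (Shat - Sig) := tri
    _ ≤ C * frobSc (Shat - Sig) + frobSc (Shat - Sig) := by linarith [key2]
    _ = (1 + C) * frobSc (Shat - Sig) := by ring
end
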